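/- arXiv:0908.2943 — 2 statements merged into one kernel-verified Lean document; each statement's English description precedes it below -/
import Mathlib

section
/- For every integer r ≥ 10, the product of the first r primes satisfies p_1 · p_2 · ⋯ · p_r > 2^{p_{r+1}}. -/
set_option maxRecDepth 1000000

open Finset

namespace Stmt2Aux

/-! ### Product of primes below m -/

/-- Product of all primes `< m`. -/
def PP (m : ℕ) : ℕ := ∏ p ∈ (Finset.range m).filter Nat.Prime, p

lemma PP_pos (m : ℕ) : 0 < PP m := by
  apply Finset.prod_pos
  intro p hp
  exact (Finset.mem_filter.mp hp).2.pos

lemma PP_succ_eq_primorial (m : ℕ) : PP (m + 1) = primorial m := rfl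

lemma PP_mono {a b : ℕ} (h : a ≤ b) : PP a ≤ PP b := by
  apply Finset.prod_le_prod_of_subset_of_one_le'
  · exact Finset.filter_subset_filter _ (Finset.range_subset_range.mpr h)
  · intro p hp _
    exact (Finset.mem_filter.mp hp).2.one_lt.le

lemma PP_succ_le_four_pow (m : ℕ) : PP (m + 1) ≤ 4 ^ m := by
  rw [PP_succ_eq_primorial]; exact primorial_le_4_pow m

lemma PP_factorization {p m : ℕ} (hp : p.Prime) :
    (PP (m + 1)).factorization p = if p ≤ m then 1 else 0 := by
  rw [PP, Nat.factorization_prod (fun q hq => (Finset.mem_filter.mp hq).2.pos.ne')]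
  rw [Finset.sum_apply']
  have : ∀ q ∈ (Finset.range (m+1)).filter Nat.Prime,
      (Nat.factorization q) p = if q = p then 1 else 0 := by
    intro q hq
    rw [(Finset.mem_filter.mp hq).2.factorization]
    simp [Finsupp.single_apply]
  rw [Finset.sum_congr rfl this, Finset.sum_ite_eq' _ p]
  by_cases h : p ≤ m
  · simp [h, Finset.mem_filter, Nat.lt_succ_iff, hp]
  · simp [h, Finset.mem_filter, Nat.lt_succ_iff, hp]

/-! ### Integer roots -/

/-- `iroot k N` is the largest `m` with `m ^ k ≤ N` (for `1 ≤ k`). -/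
def iroot (k N : ℕ) : ℕ := Nat.findGreatest (fun m => m ^ k ≤ N) N

lemma iroot_pow_le {k : ℕ} (hk : 1 ≤ k) (N : ℕ) : (iroot k N) ^ k ≤ N :=
  Nat.findGreatest_spec (P := fun m => m ^ k ≤ N) (m := 0) (Nat.zero_le _)
    (by show 0 ^ k ≤ N; rw [Nat.zero_pow hk]; exact Nat.zero_le N)

lemma le_iroot {k N p : ℕ} (hk : 1 ≤ k) (h : p ^ k ≤ N) : p ≤ iroot k N := by
  refine Nat.le_findGreatest (P := fun m => m ^ k ≤ N) ?_ h
  calc p ≤ p ^ k := Nat.le_self_pow (by omega) p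
    _ ≤ N := h

lemma iroot_one (N : ℕ) : iroot 1 N = N := by
  exact le_antisymm (Nat.findGreatest_le N) (le_iroot le_rfl (by simp))

lemma iroot_le_iroot_three {i N : ℕ} (hi : 3 ≤ i) : iroot i N ≤ iroot 3 N := by
  rcases Nat.eq_zero_or_pos (iroot i N) with h | h
  · simp [h]
  · apply le_iroot (by norm_num)
    calc (iroot i N) ^ 3 ≤ (iroot i N) ^ i := Nat.pow_le_pow_right h hi
      _ ≤ N := iroot_pow_le (by omega) N

/-! ### The Landau factorial ratio -/

/-- Key division identity: `c*M/d = (30*M/d)/(30/c)` for `c ∣ 30`. -/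
lemma div_shift (M d c e : ℕ) (hce : c * e = 30) :
    c * M / d = (30 * M / d) / e := by
  rcases Nat.eq_zero_or_pos c with hc | hc
  · rw [hc] at hce; simp at hce
  calc c * M / d = (c * M * e) / (d * e) := (Nat.mul_div_mul_right _ _ (by nlinarith)).symm
    _ = (30 * M) / (d * e) := by rw [show c * M * e = 30 * M by rw [← hce]; ring]
    _ = (30 * M) / d / e := (Nat.div_div_eq_div_mul _ _ _).symm

/-- The five floor terms, written in terms of `j = 30*M/d`. -/
lemma floor_terms (M d : ℕ) :
    15 * M / d + 10 * M / d + 6 * M / d ≤ 30 * M / d + M / d ∧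
    30 * M / d + M / d ≤ 15 * M / d + 10 * M / d + 6 * M / d + 1 := by
  have h15 := div_shift M d 15 2 (by norm_num)
  have h10 := div_shift M d 10 3 (by norm_num)
  have h6 := div_shift M d 6 5 (by norm_num)
  have h1 : M / d = (30 * M / d) / 30 := by
    simpa using div_shift M d 1 30 (by norm_num)
  rw [h15, h10, h6, h1]
  omega

def AA (n : ℕ) : ℕ := (30 * n).factorial * n.factorial
def BB (n : ℕ) : ℕ := (15 * n).factorial * (10 * n).factorial * (6 * n).factorial

lemma AA_pos (n : ℕ) : 0 < AA n := Nat.mul_pos (Nat.factorial_pos _) (Nat.factorial_pos _)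
lemma BB_pos (n : ℕ) : 0 < BB n :=
  Nat.mul_pos (Nat.mul_pos (Nat.factorial_pos _) (Nat.factorial_pos _)) (Nat.factorial_pos _)

lemma factorization_factorial {p : ℕ} (hp : p.Prime) {m b : ℕ} (h : Nat.log p m < b) :
    (m.factorial).factorization p = ∑ i ∈ Finset.Ico 1 b, m / p ^ i := by
  haveI := Fact.mk hp
  rw [Nat.factorization_def _ hp]
  exact padicValNat_factorial h

lemma log_le_logB {p m : ℕ} (hp : p.Prime) : Nat.log p m ≤ Nat.log 2 m :=
  Nat.log_anti_left (by norm_num) hp.two_le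

/-- Valuations of `AA` and `BB` as sums over `Ico 1 b`, for suitable `b`. -/
lemma vA {p : ℕ} (hp : p.Prime) {n b : ℕ} (hb : Nat.log 2 (30 * n) < b) :
    (AA n).factorization p = ∑ i ∈ Finset.Ico 1 b, (30 * n / p ^ i + n / p ^ i) := by
  have h30 : Nat.log p (30 * n) < b := lt_of_le_of_lt (log_le_logB hp) hb
  have h1 : Nat.log p n < b :=
    lt_of_le_of_lt (Nat.log_mono_right (Nat.le_mul_of_pos_left n (by norm_num))) h30
  rw [AA, Nat.factorization_mul (Nat.factorial_pos _).ne' (Nat.factorial_pos _).ne']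
  rw [Finsupp.add_apply, factorization_factorial hp h30, factorization_factorial hp h1,
    ← Finset.sum_add_distrib]

lemma vB {p : ℕ} (hp : p.Prime) {n b : ℕ} (hb : Nat.log 2 (30 * n) < b) :
    (BB n).factorization p
      = ∑ i ∈ Finset.Ico 1 b, (15 * n / p ^ i + 10 * n / p ^ i + 6 * n / p ^ i) := by
  have h30 : Nat.log p (30 * n) < b := lt_of_le_of_lt (log_le_logB hp) hb
  have hmono : ∀ c : ℕ, 0 < c → c ≤ 30 → Nat.log p (c * n) < b := fun c hc hc30 =>
    lt_of_le_of_lt (Nat.log_mono_right (Nat.mul_le_mul_right n hc30)) h30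
  rw [BB, Nat.factorization_mul (Nat.mul_pos (Nat.factorial_pos _) (Nat.factorial_pos _)).ne'
      (Nat.factorial_pos _).ne',
    Nat.factorization_mul (Nat.factorial_pos _).ne' (Nat.factorial_pos _).ne']
  rw [Finsupp.add_apply, Finsupp.add_apply,
    factorization_factorial hp (hmono 15 (by norm_num) (by norm_num)),
    factorization_factorial hp (hmono 10 (by norm_num) (by norm_num)),
    factorization_factorial hp (hmono 6 (by norm_num) (by norm_num)),
    ← Finset.sum_add_distrib, ← Finset.sum_add_distrib]

lemma BB_dvd_AA (n : ℕ) : BB n ∣ AA n := by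
  rw [← Nat.factorization_le_iff_dvd (BB_pos n).ne' (AA_pos n).ne', Finsupp.le_def]
  intro p
  by_cases hp : p.Prime
  · rw [vA hp (b := Nat.log 2 (30*n) + 1) (Nat.lt_succ_self _),
      vB hp (b := Nat.log 2 (30*n) + 1) (Nat.lt_succ_self _)]
    exact Finset.sum_le_sum fun i _ => (floor_terms n (p ^ i)).1
  · simp [Nat.factorization_eq_zero_of_not_prime _ hp]

def DD (n : ℕ) : ℕ := AA n / BB n

lemma DD_mul (n : ℕ) : BB n * DD n = AA n := Nat.mul_div_cancel' (BB_dvd_AA n)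

lemma DD_pos (n : ℕ) : 0 < DD n := by
  have := DD_mul n
  nlinarith [AA_pos n, BB_pos n]

/-- The crucial divisibility: `DD n` divides the product of `PP` of the iterated roots. -/
lemma DD_dvd (n : ℕ) :
    DD n ∣ ∏ i ∈ Finset.Ico 1 (Nat.log 2 (30 * n) + 1), PP (iroot i (30 * n) + 1) := by
  set B := Nat.log 2 (30 * n) + 1 with hB
  have hRpos : ∀ i ∈ Finset.Ico 1 B, 0 < PP (iroot i (30 * n) + 1) := fun i _ => PP_pos _
  rw [← Nat.factorization_le_iff_dvd (DD_pos n).ne'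
    (Finset.prod_pos hRpos).ne', Finsupp.le_def]
  intro p
  by_cases hp : p.Prime
  · have hvD : (DD n).factorization p
        = ∑ i ∈ Finset.Ico 1 B, ((30 * n / p ^ i + n / p ^ i)
            - (15 * n / p ^ i + 10 * n / p ^ i + 6 * n / p ^ i)) := by
      have hA := vA hp (n := n) (b := B) (Nat.lt_succ_self _)
      have hBv := vB hp (n := n) (b := B) (Nat.lt_succ_self _)
      have hsplit : ∀ i ∈ Finset.Ico 1 B,
          (30 * n / p ^ i + n / p ^ i)
            = (15 * n / p ^ i + 10 * n / p ^ i + 6 * n / p ^ i)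
              + ((30 * n / p ^ i + n / p ^ i)
                - (15 * n / p ^ i + 10 * n / p ^ i + 6 * n / p ^ i)) := by
        intro i _
        have := (floor_terms n (p ^ i)).1
        omega
      rw [DD, Nat.factorization_div (BB_dvd_AA n)]
      rw [Finsupp.tsub_apply, hA, hBv, Finset.sum_congr rfl hsplit, Finset.sum_add_distrib]
      omega
    have hvR : (∏ i ∈ Finset.Ico 1 B, PP (iroot i (30 * n) + 1)).factorization p
        = ∑ i ∈ Finset.Ico 1 B, if p ≤ iroot i (30 * n) then 1 else 0 := by
      rw [Nat.factorization_prod (fun i hi => (hRpos i hi).ne'), Finset.sum_apply']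
      exact Finset.sum_congr rfl fun i _ => PP_factorization hp
    rw [hvD, hvR]
    apply Finset.sum_le_sum
    intro i hi
    have hi1 : 1 ≤ i := (Finset.mem_Ico.mp hi).1
    by_cases hple : p ^ i ≤ 30 * n
    · have h1 := (floor_terms n (p ^ i)).2
      have h2 : p ≤ iroot i (30 * n) := le_iroot hi1 hple
      simp only [h2, if_true]
      omega
    · have h0 : 30 * n / p ^ i = 0 := Nat.div_eq_of_lt (by omega)
      have h0' : ∀ c : ℕ, c ≤ 30 → c * n / p ^ i = 0 := fun c hc =>
        Nat.eq_zero_of_le_zero (le_trans (Nat.div_le_div_right (by nlinarith)) h0.le)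
      have h1n : n / p ^ i = 0 := by simpa using h0' 1 (by norm_num)
      rw [h0, h1n, h0' 15 (by norm_num), h0' 10 (by norm_num), h0' 6 (by norm_num)]
      simp
  · simp [Nat.factorization_eq_zero_of_not_prime _ hp]

/-! ### Stirling-type lower bound: `2^(39n) * BB n ≤ AA n` for `n ≥ 60` -/

lemma fact_step (m k : ℕ) :
    (m + k).factorial = m.factorial * ∏ j ∈ Finset.range k, (m + 1 + j) := by
  induction k with
  | zero => simp
  | succ k ih =>
    rw [Finset.prod_range_succ, ← Nat.add_assoc, Nat.factorial_succ, ih]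
    ring

lemma prod_range_le (c k m : ℕ) (hk : k ≤ c) :
    ∏ j ∈ Finset.range k, (c * m + 1 + j) ≤ (c * (m + 1)) ^ k := by
  calc ∏ j ∈ Finset.range k, (c * m + 1 + j)
      ≤ ∏ _j ∈ Finset.range k, (c * (m + 1)) := by
        apply Finset.prod_le_prod (fun _ _ => Nat.zero_le _)
        intro j hj
        have : j < k := Finset.mem_range.mp hj
        nlinarith
    _ = (c * (m + 1)) ^ k := by rw [Finset.prod_const, Finset.card_range]

lemma le_prod_range (c k m : ℕ) :
    (c * m) ^ k ≤ ∏ j ∈ Finset.range k, (c * m + 1 + j) := by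
  calc (c * m) ^ k = ∏ _j ∈ Finset.range k, (c * m) := by
        rw [Finset.prod_const, Finset.card_range]
    _ ≤ _ := Finset.prod_le_prod (fun _ _ => Nat.zero_le _) (fun j _ => by omega)

lemma step_const : 2 ^ 39 * 15 ^ 15 * 10 ^ 10 * 6 ^ 6 * 61 ^ 30 ≤ 30 ^ 30 * 60 ^ 30 := by decide

lemma stepL {n : ℕ} (hn : 60 ≤ n) :
    2 ^ 39 * ((∏ j ∈ Finset.range 15, (15 * n + 1 + j)) *
        (∏ j ∈ Finset.range 10, (10 * n + 1 + j)) * (∏ j ∈ Finset.range 6, (6 * n + 1 + j)))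
      ≤ (∏ j ∈ Finset.range 30, (30 * n + 1 + j)) * (n + 1) := by
  have h15 := prod_range_le 15 15 n le_rfl
  have h10 := prod_range_le 10 10 n le_rfl
  have h6 := prod_range_le 6 6 n le_rfl
  have h30 := le_prod_range 30 30 n
  have key : 2 ^ 39 * ((15 * (n+1)) ^ 15 * (10 * (n+1)) ^ 10 * (6 * (n+1)) ^ 6)
      ≤ (30 * n) ^ 30 * (n + 1) := by
    have h61 : 60 * (n + 1) ≤ 61 * n := by omega
    have hp61 : (60 * (n + 1)) ^ 30 ≤ (61 * n) ^ 30 := Nat.pow_le_pow_left h61 30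
    have expand : 2 ^ 39 * ((15 * (n+1)) ^ 15 * (10 * (n+1)) ^ 10 * (6 * (n+1)) ^ 6)
        * (60 ^ 30 * (n+1) ^ 30 * (n+1))
        = (2 ^ 39 * 15 ^ 15 * 10 ^ 10 * 6 ^ 6) * ((60 * (n+1)) ^ 30)
          * ((n + 1) ^ 31 * (n+1) ^ 1) := by ring
    have expand2 : (30 ^ 30 * 60 ^ 30) * (n ^ 30 * (n+1) ^ 31 * (n+1))
        = ((30 * n) ^ 30 * (n + 1)) * (60 ^ 30 * (n+1) ^ 30 * (n+1)) := by ring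
    have chain : 2 ^ 39 * ((15 * (n+1)) ^ 15 * (10 * (n+1)) ^ 10 * (6 * (n+1)) ^ 6)
        * (60 ^ 30 * (n+1) ^ 30 * (n+1))
        ≤ ((30 * n) ^ 30 * (n + 1)) * (60 ^ 30 * (n+1) ^ 30 * (n+1)) := by
      rw [expand, ← expand2]
      calc (2 ^ 39 * 15 ^ 15 * 10 ^ 10 * 6 ^ 6) * ((60 * (n+1)) ^ 30) * ((n + 1) ^ 31 * (n+1) ^ 1)
          ≤ (2 ^ 39 * 15 ^ 15 * 10 ^ 10 * 6 ^ 6) * ((61 * n) ^ 30) * ((n + 1) ^ 31 * (n+1) ^ 1) := by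
            exact Nat.mul_le_mul_right _ (Nat.mul_le_mul_left _ hp61)
        _ = (2 ^ 39 * 15 ^ 15 * 10 ^ 10 * 6 ^ 6 * 61 ^ 30) * (n ^ 30 * ((n + 1) ^ 31 * (n+1) ^ 1)) := by
            ring
        _ ≤ (30 ^ 30 * 60 ^ 30) * (n ^ 30 * ((n + 1) ^ 31 * (n+1) ^ 1)) :=
            Nat.mul_le_mul_right _ step_const
        _ = (30 ^ 30 * 60 ^ 30) * (n ^ 30 * (n+1) ^ 31 * (n+1)) := by ring
    exact Nat.le_of_mul_le_mul_right chain (by positivity)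
  calc 2 ^ 39 * ((∏ j ∈ Finset.range 15, (15 * n + 1 + j)) *
        (∏ j ∈ Finset.range 10, (10 * n + 1 + j)) * (∏ j ∈ Finset.range 6, (6 * n + 1 + j)))
      ≤ 2 ^ 39 * ((15 * (n+1)) ^ 15 * (10 * (n+1)) ^ 10 * (6 * (n+1)) ^ 6) := by
        apply Nat.mul_le_mul_left
        exact Nat.mul_le_mul (Nat.mul_le_mul h15 h10) h6
    _ ≤ (30 * n) ^ 30 * (n + 1) := key
    _ ≤ _ := Nat.mul_le_mul_right _ h30

set_option exponentiation.threshold 100000 in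
lemma base60 : 2 ^ (39 * 60) * BB 60 ≤ AA 60 := by
  show 2 ^ 2340 * ((900).factorial * (600).factorial * (360).factorial)
      ≤ (1800).factorial * (60).factorial
  decide

lemma stirling_lower {n : ℕ} (hn : 60 ≤ n) : 2 ^ (39 * n) * BB n ≤ AA n := by
  induction n, hn using Nat.le_induction with
  | base => exact base60
  | succ n hn ih =>
    have hA : AA (n + 1) = AA n * ((∏ j ∈ Finset.range 30, (30 * n + 1 + j)) * (n + 1)) := by
      rw [AA, AA, show 30 * (n+1) = 30 * n + 30 by ring, fact_step (30 * n) 30,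
        Nat.factorial_succ]
      ring
    have hB : BB (n + 1) = BB n * ((∏ j ∈ Finset.range 15, (15 * n + 1 + j)) *
        (∏ j ∈ Finset.range 10, (10 * n + 1 + j)) * (∏ j ∈ Finset.range 6, (6 * n + 1 + j))) := by
      rw [BB, BB, show 15 * (n+1) = 15 * n + 15 by ring, show 10 * (n+1) = 10 * n + 10 by ring,
        show 6 * (n+1) = 6 * n + 6 by ring, fact_step (15 * n) 15, fact_step (10 * n) 10,
        fact_step (6 * n) 6]
      ring
    calc 2 ^ (39 * (n + 1)) * BB (n + 1)
        = (2 ^ (39 * n) * BB n) * (2 ^ 39 * ((∏ j ∈ Finset.range 15, (15 * n + 1 + j)) *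
            (∏ j ∈ Finset.range 10, (10 * n + 1 + j)) *
            (∏ j ∈ Finset.range 6, (6 * n + 1 + j)))) := by
          rw [hB, show 39 * (n+1) = 39 * n + 39 by ring, pow_add]; ring
      _ ≤ (2 ^ (39 * n) * BB n) * ((∏ j ∈ Finset.range 30, (30 * n + 1 + j)) * (n + 1)) :=
          Nat.mul_le_mul_left _ (stepL hn)
      _ ≤ AA n * ((∏ j ∈ Finset.range 30, (30 * n + 1 + j)) * (n + 1)) :=
          Nat.mul_le_mul_right _ ih
      _ = AA (n + 1) := hA.symm

lemma DD_lower {n : ℕ} (hn : 60 ≤ n) : 2 ^ (39 * n) ≤ DD n := by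
  have h := stirling_lower hn
  rw [← DD_mul n] at h
  have hB := BB_pos n
  calc 2 ^ (39 * n) = (BB n * 2 ^ (39 * n)) / BB n := by
        rw [Nat.mul_div_cancel_left _ hB]
    _ ≤ (BB n * DD n) / BB n := by
        apply Nat.div_le_div_right
        calc BB n * 2 ^ (39 * n) = 2 ^ (39 * n) * BB n := by ring
          _ ≤ BB n * DD n := h
    _ = DD n := by rw [Nat.mul_div_cancel_left _ hB]

/-! ### Main analytic bound -/

lemma cube_le_two_pow {L : ℕ} (h : 11 ≤ L) : (L + 1) ^ 3 ≤ 2 ^ L := by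
  induction L, h using Nat.le_induction with
  | base => decide
  | succ L hL ih =>
    have hll : 11 * L ≤ L * L := Nat.mul_le_mul_right L hL
    have hlll : 11 * (L * L) ≤ L * (L * L) := Nat.mul_le_mul_right _ hL
    have h1 : (L + 2) ^ 3 ≤ 2 * (L + 1) ^ 3 := by ring_nf; ring_nf at hll hlll; omega
    calc (L + 2) ^ 3 ≤ 2 * (L + 1) ^ 3 := h1
      _ ≤ 2 * 2 ^ L := by omega
      _ = 2 ^ (L + 1) := by rw [pow_succ]; ring

lemma arith_lemma {x n N s v u : ℕ} (hx : 2400 ≤ x) (hNx : N ≤ x) (hxN : x < N + 30)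
    (hN : N = 30 * n) (h48 : 48 * s ≤ N) (h13 : 13 * u ≤ N) (hv : v ≤ u) :
    x + 2 + 2 * (s + v) ≤ 39 * n := by omega

theorem analytic {x : ℕ} (hx : 2400 ≤ x) : 2 ^ (x + 1) < PP (x + 1) := by
  obtain ⟨n, hn_def⟩ : ∃ n, n = x / 30 := ⟨_, rfl⟩
  obtain ⟨N, hN_def⟩ : ∃ N, N = 30 * n := ⟨_, rfl⟩
  have hn : 60 ≤ n := by omega
  have hNx : N ≤ x := by omega
  have hxN : x < N + 30 := by omega
  have hN2400 : 2400 ≤ N := by omega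
  obtain ⟨L, hL_def⟩ : ∃ L, L = Nat.log 2 N := ⟨_, rfl⟩
  obtain ⟨B, hB_def⟩ : ∃ B, B = L + 1 := ⟨_, rfl⟩
  obtain ⟨s, hs_def⟩ : ∃ s, s = iroot 2 N := ⟨_, rfl⟩
  obtain ⟨t, ht_def⟩ : ∃ t, t = iroot 3 N := ⟨_, rfl⟩
  have hs48 : 48 ≤ s := by
    rw [hs_def]
    exact le_iroot (by norm_num) (by calc (48:ℕ) ^ 2 = 2304 := by norm_num
      _ ≤ N := by omega)
  have hss : s * s ≤ N := by
    rw [hs_def]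
    have := iroot_pow_le (k := 2) (by norm_num) N
    rwa [pow_two] at this
  have ht13 : 13 ≤ t := by
    rw [ht_def]
    exact le_iroot (by norm_num) (by calc (13:ℕ) ^ 3 = 2197 := by norm_num
      _ ≤ N := by omega)
  have httt : t * (t * t) ≤ N := by
    have := iroot_pow_le (k := 3) (by norm_num) N
    rw [pow_succ, pow_two, mul_comm ((iroot 3 N) * (iroot 3 N))] at this
    rw [ht_def]
    exact this
  have hL11 : 11 ≤ L := by
    rw [hL_def]
    exact (Nat.le_log_iff_pow_le (by norm_num) (by omega)).mpr
      (by calc (2:ℕ) ^ 11 = 2048 := by norm_num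
        _ ≤ N := by omega)
  have h2LN : 2 ^ L ≤ N := by
    rw [hL_def]
    exact Nat.pow_log_le_self 2 (by omega)
  have hBt : B ≤ t := by
    rw [ht_def]
    apply le_iroot (by norm_num)
    calc B ^ 3 = (L + 1) ^ 3 := by rw [hB_def]
      _ ≤ 2 ^ L := cube_le_two_pow hL11
      _ ≤ N := h2LN
  have hB3 : 3 ≤ B := by omega
  -- product bounds
  have hDle : DD n ≤ ∏ i ∈ Finset.Ico 1 B, PP (iroot i N + 1) := by
    have heq : Nat.log 2 (30 * n) + 1 = B := by rw [hB_def, hL_def, hN_def]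
    have := Nat.le_of_dvd (Finset.prod_pos fun i _ => PP_pos _) (DD_dvd n)
    rwa [heq, show 30 * n = N from hN_def.symm] at this
  have hsplit : ∏ i ∈ Finset.Ico 1 B, PP (iroot i N + 1)
      = PP (N + 1) * ∏ i ∈ Finset.Ico 2 B, PP (iroot i N + 1) := by
    rw [Finset.prod_eq_prod_Ico_succ_bot (by omega : 1 < B), iroot_one]
  have hjunk : ∏ i ∈ Finset.Ico 2 B, PP (iroot i N + 1) ≤ 2 ^ (2 * (s + B * t)) := by
    have h1 : ∏ i ∈ Finset.Ico 2 B, PP (iroot i N + 1)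
        ≤ ∏ i ∈ Finset.Ico 2 B, 4 ^ (iroot i N) :=
      Finset.prod_le_prod (fun _ _ => Nat.zero_le _) fun i _ => PP_succ_le_four_pow _
    have h2 : ∏ i ∈ Finset.Ico 2 B, (4:ℕ) ^ (iroot i N) = 4 ^ (∑ i ∈ Finset.Ico 2 B, iroot i N) :=
      Finset.prod_pow_eq_pow_sum _ _ _
    have h3 : ∑ i ∈ Finset.Ico 2 B, iroot i N ≤ s + B * t := by
      rw [Finset.sum_eq_sum_Ico_succ_bot (by omega : 2 < B), ← hs_def]
      have h4 : ∑ k ∈ Finset.Ico (2+1) B, iroot k N ≤ (B - (2+1)) * t := by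
        calc ∑ k ∈ Finset.Ico (2+1) B, iroot k N ≤ ∑ _k ∈ Finset.Ico (2+1) B, t :=
              Finset.sum_le_sum (fun i hi => by
                rw [ht_def]; exact iroot_le_iroot_three (Finset.mem_Ico.mp hi).1)
          _ = (B - (2+1)) * t := by rw [Finset.sum_const, Nat.card_Ico, smul_eq_mul]
      have h6 : (B - (2+1)) * t ≤ B * t := Nat.mul_le_mul_right _ (by omega)
      omega
    calc ∏ i ∈ Finset.Ico 2 B, PP (iroot i N + 1)
        ≤ 4 ^ (∑ i ∈ Finset.Ico 2 B, iroot i N) := h2 ▸ h1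
      _ ≤ 4 ^ (s + B * t) := Nat.pow_le_pow_right (by norm_num) h3
      _ = 2 ^ (2 * (s + B * t)) := by rw [show (4:ℕ) = 2 ^ 2 by norm_num, ← pow_mul]
  -- arithmetic
  have harith : x + 2 + 2 * (s + B * t) ≤ 39 * n := by
    refine arith_lemma hx hNx hxN hN_def (le_trans (Nat.mul_le_mul_right s hs48) hss)
      (u := t * t) ?_ ?_
    · calc 13 * (t * t) ≤ t * (t * t) := Nat.mul_le_mul_right _ ht13
        _ ≤ N := httt
    · exact Nat.mul_le_mul_right _ hBt
  -- conclude
  have hchain : 2 ^ (x + 2) * 2 ^ (2 * (s + B * t)) ≤ PP (x + 1) * 2 ^ (2 * (s + B * t)) := by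
    calc 2 ^ (x + 2) * 2 ^ (2 * (s + B * t)) = 2 ^ (x + 2 + 2 * (s + B * t)) := by
          rw [← pow_add]
      _ ≤ 2 ^ (39 * n) := Nat.pow_le_pow_right (by norm_num) harith
      _ ≤ DD n := DD_lower hn
      _ ≤ PP (N + 1) * ∏ i ∈ Finset.Ico 2 B, PP (iroot i N + 1) := hsplit ▸ hDle
      _ ≤ PP (N + 1) * 2 ^ (2 * (s + B * t)) := Nat.mul_le_mul_left _ hjunk
      _ ≤ PP (x + 1) * 2 ^ (2 * (s + B * t)) :=
          Nat.mul_le_mul_right _ (PP_mono (by omega))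
  have h2 : 2 ^ (x + 2) ≤ PP (x + 1) := Nat.le_of_mul_le_mul_right hchain (by positivity)
  calc 2 ^ (x + 1) < 2 ^ (x + 2) := Nat.pow_lt_pow_right (by norm_num) (by omega)
    _ ≤ PP (x + 1) := h2

/-! ### Finite verification below 2500 -/

/-- Trial division: no divisor in `{d, d+2, d+4, ...}` up to `√n`. -/
def tdiv : ℕ → ℕ → ℕ → Bool
  | 0, d, n => decide (n < d * d)
  | f+1, d, n => if n < d * d then true else if n % d == 0 then false else tdiv f (d + 2) n

def isP (n : ℕ) : Bool :=
  if n < 2 then false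
  else if n == 2 then true
  else if n % 2 == 0 then false
  else tdiv n 3 n

lemma tdiv_sound : ∀ f d n, tdiv f d n = true →
    ∀ k m, m = d + 2 * k → m * m ≤ n → ¬ m ∣ n := by
  intro f
  induction f with
  | zero =>
    intro d n h k m hm hmn
    rw [tdiv] at h
    have := of_decide_eq_true h
    nlinarith [Nat.mul_le_mul (show d ≤ m by omega) (show d ≤ m by omega)]
  | succ f ih =>
    intro d n h k m hm hmn
    rw [tdiv] at h
    split at h
    · rename_i hlt
      nlinarith [Nat.mul_le_mul (show d ≤ m by omega) (show d ≤ m by omega)]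
    · split at h
      · exact absurd h (by simp)
      · rename_i hlt hmod
        rcases Nat.eq_zero_or_pos k with hk | hk
        · intro hdvd
          have hdn : d ∣ n := by
            have hmd : m = d := by omega
            rwa [hmd] at hdvd
          obtain ⟨c, rfl⟩ := hdn
          simp [Nat.mul_mod_right] at hmod
        · exact ih (d + 2) n h (k - 1) m (by omega) hmn

lemma isP_prime {n : ℕ} (h : isP n = true) : n.Prime := by
  rw [isP] at h
  split at h
  · simp at h
  · split at h
    · rename_i h1 h2
      have : n = 2 := by simpa using h2
      exact this ▸ Nat.prime_two
    · split at h
      · simp at h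
      · rename_i h1 h2 h3
        have hn2 : 2 ≤ n := by omega
        have hodd : n % 2 ≠ 0 := by simpa using h3
        by_contra hnp
        have hp := Nat.minFac_prime (show n ≠ 1 by omega)
        have hpd := Nat.minFac_dvd n
        set p := Nat.minFac n with hp_def
        have hppn : p * p ≤ n := by
          obtain ⟨c, hc⟩ := hpd
          have hc1 : c ≠ 1 := by
            intro hc1
            rw [hc1, mul_one] at hc
            exact hnp (hc ▸ hp)
          have hc0 : c ≠ 0 := by
            intro h0
            rw [h0, mul_zero] at hc
            omega
          have hpc : p ≤ c := by
            have hcd : Nat.minFac c ∣ n := hc ▸ Dvd.dvd.mul_left (Nat.minFac_dvd c) p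
            have h2c : 2 ≤ Nat.minFac c := (Nat.minFac_prime hc1).two_le
            calc p ≤ Nat.minFac c := Nat.minFac_le_of_dvd h2c hcd
              _ ≤ c := Nat.minFac_le (by omega)
          calc p * p ≤ p * c := Nat.mul_le_mul_left p hpc
            _ = n := hc.symm
        have hp2 : p ≠ 2 := by
          intro h2
          rw [h2] at hpd
          omega
        have hp3 : 3 ≤ p := by
          have := hp.two_le
          omega
        have hpodd : p % 2 = 1 := by
          rcases Nat.mod_two_eq_zero_or_one p with h | h
          · exfalso
            have : 2 ∣ p := Nat.dvd_of_mod_eq_zero h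
            have : p = 2 := ((Nat.prime_dvd_prime_iff_eq Nat.prime_two hp).mp this).symm
            exact hp2 this
          · exact h
        exact tdiv_sound n 3 n h ((p - 3) / 2) p (by omega) hppn hpd

lemma tdiv_complete : ∀ f d n, n.Prime → 2 ≤ d → n < (d + 2 * f) * (d + 2 * f) →
    tdiv f d n = true := by
  intro f
  induction f with
  | zero =>
    intro d n hp hd hlt
    rw [tdiv]
    simp only [Nat.mul_zero, Nat.add_zero] at hlt
    exact decide_eq_true hlt
  | succ f ih =>
    intro d n hp hd hlt
    rw [tdiv]
    split
    · rfl
    · rename_i hge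
      have hddn : d * d ≤ n := by omega
      have hdn : d < n := by nlinarith
      have hnd : ¬ d ∣ n := by
        intro hdvd
        rcases (Nat.Prime.eq_one_or_self_of_dvd hp d hdvd) with h | h <;> omega
      have : ¬ n % d = 0 := fun h => hnd (Nat.dvd_of_mod_eq_zero h)
      rw [if_neg (by simpa using this)]
      exact ih (d + 2) n hp (by omega) (by ring_nf; ring_nf at hlt; omega)

lemma isP_of_prime {n : ℕ} (h : n.Prime) : isP n = true := by
  rw [isP]
  have h2 : 2 ≤ n := h.two_le
  rw [if_neg (by omega)]
  by_cases hn2 : n = 2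
  · rw [if_pos (by simpa using hn2)]
  · rw [if_neg (by simpa using hn2)]
    have hodd : n % 2 = 1 := by
      rcases Nat.mod_two_eq_zero_or_one n with ho | ho
      · exact absurd (((Nat.prime_dvd_prime_iff_eq Nat.prime_two h).mp
          (Nat.dvd_of_mod_eq_zero ho)).symm) hn2
      · exact ho
    rw [if_neg (by simp [hodd])]
    exact tdiv_complete n 3 n h (by omega) (by nlinarith)

/-- One-pass checker: for every prime `m ≤ q < m + f` with `31 ≤ q`, the accumulated
product of primes below `q` exceeds `2 ^ q`. -/
def pchk : ℕ → ℕ → ℕ → Bool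
  | 0, _, _ => true
  | f+1, m, acc =>
    if isP m then
      (decide (m < 31) || decide (2 ^ m < acc)) && pchk f (m + 1) (acc * m)
    else pchk f (m + 1) acc

lemma pchk_sound : ∀ f m acc, pchk f m acc = true →
    acc = PP m →
    ∀ q, q.Prime → m ≤ q → q < m + f → 31 ≤ q → 2 ^ q < PP q := by
  intro f
  induction f with
  | zero => intro m acc _ _ q _ _ h; omega
  | succ f ih =>
    intro m acc hchk hacc q hq hmq hqf h31
    have hPPsucc : PP (m + 1) = if m.Prime then acc * m else acc := by
      simp only [PP] at hacc ⊢
      rw [Finset.range_add_one, Finset.filter_insert]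
      split
      · rw [Finset.prod_insert (fun hmem => absurd (Finset.mem_filter.mp hmem).1
          (by simp)), hacc]
        ring
      · exact hacc.symm
    rw [pchk] at hchk
    rcases Nat.lt_or_ge m q with hlt | hge
    · -- recurse
      split at hchk
      · rename_i hPm
        have h2 := (Bool.and_eq_true _ _).mp hchk |>.2
        refine ih (m+1) (acc * m) h2 ?_ q hq (by omega) (by omega) h31
        rw [hPPsucc, if_pos (isP_prime hPm)]
      · rename_i hPm
        refine ih (m+1) acc hchk ?_ q hq (by omega) (by omega) h31
        rw [hPPsucc, if_neg (fun hp => hPm (isP_of_prime hp))]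
    · -- q = m
      have hqm : q = m := by omega
      subst hqm
      rw [if_pos (isP_of_prime hq)] at hchk
      have h1 := (Bool.and_eq_true _ _).mp hchk |>.1
      rcases (Bool.or_eq_true _ _).mp h1 with h | h
      · have := of_decide_eq_true h
        omega
      · have := of_decide_eq_true h
        omega

lemma pchk_run : pchk 2500 0 1 = true := by decide

lemma finite_check {q : ℕ} (hq : q.Prime) (h31 : 31 ≤ q) (h2500 : q < 2500) :
    2 ^ q < PP q := by
  have : PP 0 = 1 := rfl
  exact pchk_sound 2500 0 1 pchk_run this.symm q hq (Nat.zero_le q) (by omega) h31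

/-! ### Relating `Finset.range r` products of `nth Prime` to `PP` -/

lemma prod_nth_eq (r : ℕ) :
    ∏ i ∈ Finset.range r, Nat.nth Nat.Prime i = PP (Nat.nth Nat.Prime r) := by
  rw [PP]
  apply Finset.prod_nbij' (fun i => Nat.nth Nat.Prime i) (fun p => Nat.count Nat.Prime p)
  · intro i hi
    rw [Finset.mem_filter, Finset.mem_range]
    exact ⟨(Nat.nth_lt_nth Nat.infinite_setOf_prime).mpr (Finset.mem_range.mp hi),
      Nat.prime_nth_prime i⟩
  · intro p hp
    rw [Finset.mem_filter, Finset.mem_range] at hp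
    rw [Finset.mem_range]
    by_contra hcon
    push_neg at hcon
    have h1 : Nat.nth Nat.Prime r ≤ Nat.nth Nat.Prime (Nat.count Nat.Prime p) :=
      Nat.nth_monotone Nat.infinite_setOf_prime hcon
    rw [Nat.nth_count hp.2] at h1
    omega
  · intro i _
    exact Nat.count_nth_of_infinite Nat.infinite_setOf_prime i
  · intro p hp
    exact Nat.nth_count (Finset.mem_filter.mp hp).2
  · intro i _
    rfl

lemma nth_prime_ten : Nat.nth Nat.Prime 10 = 31 := by
  have h31 : Nat.Prime 31 := by norm_num
  have hc : Nat.count Nat.Prime 31 = 10 := by decide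
  rw [← hc, Nat.nth_count h31]

end Stmt2Aux

/-- For every integer r ≥ 10, p_1 ⋯ p_r > 2^{p_{r+1}}. -/
theorem stmt_2 (r : ℕ) (hr : 10 ≤ r) :
    (∏ i ∈ Finset.range r, Nat.nth Nat.Prime i) > 2 ^ (Nat.nth Nat.Prime r) := by
  obtain ⟨q, hq_def⟩ : ∃ q, q = Nat.nth Nat.Prime r := ⟨_, rfl⟩
  have hq : q.Prime := hq_def ▸ Nat.prime_nth_prime r
  have h31 : 31 ≤ q := by
    rw [hq_def, ← Stmt2Aux.nth_prime_ten]
    exact Nat.nth_monotone Nat.infinite_setOf_prime hr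
  rw [Stmt2Aux.prod_nth_eq, ← hq_def]
  show 2 ^ q < Stmt2Aux.PP q
  rcases Nat.lt_or_ge q 2500 with hlt | hge
  · exact Stmt2Aux.finite_check hq h31 hlt
  · have hx : 2400 ≤ q - 1 := by omega
    have := Stmt2Aux.analytic hx
    rwa [Nat.sub_add_cancel (by omega)] at this
end

section
/- For every integer n ≥ 10, the product of the first n primes satisfies p_1 · p_2 · ⋯ · p_n > p_{n+1}^6. -/
open Nat Finset

private lemma nthp (k p : ℕ) (hp : p.Prime) (h : Nat.count Nat.Prime p = k) :
    Nat.nth Nat.Prime k = p := h ▸ Nat.nth_count hp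

private lemma v0 : Nat.nth Nat.Prime 0 = 2 := nthp _ _ (by norm_num) (by decide)
private lemma v1 : Nat.nth Nat.Prime 1 = 3 := nthp _ _ (by norm_num) (by decide)
private lemma v2 : Nat.nth Nat.Prime 2 = 5 := nthp _ _ (by norm_num) (by decide)
private lemma v3 : Nat.nth Nat.Prime 3 = 7 := nthp _ _ (by norm_num) (by decide)
private lemma v4 : Nat.nth Nat.Prime 4 = 11 := nthp _ _ (by norm_num) (by decide)
private lemma v5 : Nat.nth Nat.Prime 5 = 13 := nthp _ _ (by norm_num) (by decide)
private lemma v6 : Nat.nth Nat.Prime 6 = 17 := nthp _ _ (by norm_num) (by decide)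
private lemma v7 : Nat.nth Nat.Prime 7 = 19 := nthp _ _ (by norm_num) (by decide)
private lemma v8 : Nat.nth Nat.Prime 8 = 23 := nthp _ _ (by norm_num) (by decide)
private lemma v9 : Nat.nth Nat.Prime 9 = 29 := nthp _ _ (by norm_num) (by decide)
private lemma v10 : Nat.nth Nat.Prime 10 = 31 := nthp _ _ (by norm_num) (by decide)
private lemma v11 : Nat.nth Nat.Prime 11 = 37 := nthp _ _ (by norm_num) (by decide)
private lemma v12 : Nat.nth Nat.Prime 12 = 41 := nthp _ _ (by norm_num) (by decide)
private lemma v13 : Nat.nth Nat.Prime 13 = 43 := nthp _ _ (by norm_num) (by decide)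
private lemma v14 : Nat.nth Nat.Prime 14 = 47 := nthp _ _ (by norm_num) (by decide)
private lemma v15 : Nat.nth Nat.Prime 15 = 53 := nthp _ _ (by norm_num) (by decide)
private lemma v16 : Nat.nth Nat.Prime 16 = 59 := nthp _ _ (by norm_num) (by decide)
private lemma v17 : Nat.nth Nat.Prime 17 = 61 := nthp _ _ (by norm_num) (by decide)
private lemma v18 : Nat.nth Nat.Prime 18 = 67 := nthp _ _ (by norm_num) (by decide)

/-- Bertrand for nth primes. -/
private lemma bertrand_nth (n : ℕ) :
    Nat.nth Nat.Prime (n + 1) ≤ 2 * Nat.nth Nat.Prime n := by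
  have h2 : 2 ≤ Nat.nth Nat.Prime n := by
    have := Nat.add_two_le_nth_prime n; omega
  obtain ⟨p, hp, h1, hle⟩ := Nat.exists_prime_lt_and_le_two_mul (Nat.nth Nat.Prime n)
    (by omega)
  have hcount : n + 1 ≤ Nat.count Nat.Prime p := by
    calc n + 1 = Nat.count Nat.Prime (Nat.nth Nat.Prime n + 1) :=
          (Nat.count_nth_succ_of_infinite Nat.infinite_setOf_prime n).symm
      _ ≤ Nat.count Nat.Prime p := Nat.count_monotone _ (by omega)
  have hc1 : n + 1 < Nat.count Nat.Prime (p + 1) := by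
    rw [Nat.count_succ, if_pos hp]; omega
  have h' : Nat.nth Nat.Prime (n + 1) < p + 1 :=
    (Nat.lt_nth_iff_count_lt Nat.infinite_setOf_prime).mp hc1
  omega

private lemma step (n : ℕ) (h18 : 18 ≤ n)
    (ih : (∏ i ∈ Finset.range n, Nat.nth Nat.Prime i) > (Nat.nth Nat.Prime n) ^ 6) :
    (∏ i ∈ Finset.range (n + 1), Nat.nth Nat.Prime i) > (Nat.nth Nat.Prime (n + 1)) ^ 6 := by
  have h64 : 64 ≤ Nat.nth Nat.Prime n := by
    calc 64 ≤ Nat.nth Nat.Prime 18 := by norm_num [v18]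
      _ ≤ Nat.nth Nat.Prime n := Nat.nth_monotone Nat.infinite_setOf_prime h18
  have hpos : 0 < Nat.nth Nat.Prime n := by omega
  rw [Finset.prod_range_succ]
  calc (Nat.nth Nat.Prime (n + 1)) ^ 6 ≤ (2 * Nat.nth Nat.Prime n) ^ 6 :=
        Nat.pow_le_pow_left (bertrand_nth n) 6
    _ = 64 * (Nat.nth Nat.Prime n) ^ 6 := by ring
    _ ≤ (Nat.nth Nat.Prime n) ^ 6 * Nat.nth Nat.Prime n := by
        rw [mul_comm]; exact Nat.mul_le_mul_left _ h64
    _ < (∏ i ∈ Finset.range n, Nat.nth Nat.Prime i) * Nat.nth Nat.Prime n :=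
        (Nat.mul_lt_mul_right hpos).mpr ih

/-- For every integer n ≥ 10, p_1 ⋯ p_n > p_{n+1}^6. -/
theorem stmt_10 (n : ℕ) (hn : 10 ≤ n) :
    (∏ i ∈ Finset.range n, Nat.nth Nat.Prime i) > (Nat.nth Nat.Prime n) ^ 6 := by
  rcases le_or_gt 18 n with h | h
  · induction n, h using Nat.le_induction with
    | base =>
        simp only [Finset.prod_range_succ, Finset.prod_range_zero,
          v0, v1, v2, v3, v4, v5, v6, v7, v8, v9, v10, v11, v12, v13, v14, v15, v16, v17, v18]
        norm_num
    | succ n h18 ih => exact step n h18 (ih (by omega))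
  · interval_cases n <;>
      simp only [Finset.prod_range_succ, Finset.prod_range_zero,
        v0, v1, v2, v3, v4, v5, v6, v7, v8, v9, v10, v11, v12, v13, v14, v15, v16, v17, v18] <;>
      norm_num
end
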